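/- Let (X,d) be a metric space and 𝔅 a bornology on X with closed base. If X satisfies S_fin(𝒪_{𝔅^s},𝒪_{𝔅^s}), then C(X,ℝ) with the topology τ^s_𝔅 has countable fan tightness at the zero function. -/
import Mathlib


open Set Metric

variable {X : Type*} [MetricSpace X]

/-- The δ-enlargement of a set `B`: union of open δ-balls around points of `B`. -/
def enl (B : Set X) (δ : ℝ) : Set X := ⋃ b ∈ B, Metric.ball b δ

/-- A bornology (in the sense of Hu/Hogbe-Nlend): a family of nonempty subsets
covering `X`, closed under finite unions and hereditary. -/
def IsBorn (𝔅 : Set (Set X)) : Prop :=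
  (∀ B ∈ 𝔅, B.Nonempty) ∧ (⋃₀ 𝔅 = Set.univ) ∧
  (∀ B₁ ∈ 𝔅, ∀ B₂ ∈ 𝔅, B₁ ∪ B₂ ∈ 𝔅) ∧
  (∀ B ∈ 𝔅, ∀ A : Set X, A ⊆ B → A.Nonempty → A ∈ 𝔅)

/-- The bornology has a base consisting of closed sets. -/
def HasClosedBase (𝔅 : Set (Set X)) : Prop :=
  ∃ 𝔅₀ ⊆ 𝔅, (∀ B ∈ 𝔅₀, IsClosed B) ∧ ∀ B ∈ 𝔅, ∃ B₀ ∈ 𝔅₀, B ⊆ B₀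

/-- A strong 𝔅-cover (𝔅ˢ-cover): an open cover 𝒰 of X with X ∉ 𝒰 such that for
every `B ∈ 𝔅` some δ-enlargement of `B` lies in a member of 𝒰. -/
def IsBsCover (𝔅 : Set (Set X)) (𝒰 : Set (Set X)) : Prop :=
  (∀ U ∈ 𝒰, IsOpen U) ∧ Set.univ ∉ 𝒰 ∧ ⋃₀ 𝒰 = Set.univ ∧
  ∀ B ∈ 𝔅, ∃ U ∈ 𝒰, ∃ δ > 0, enl B δ ⊆ U

/-- A γ_{𝔅ˢ}-cover: an infinite countable open cover `(U n)` such that for every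
`B ∈ 𝔅` there are `n₀` and positive reals `δ n` (for `n ≥ n₀`) with
`enl B (δ n) ⊆ U n` for all `n ≥ n₀`. -/
def IsGammaCover (𝔅 : Set (Set X)) (U : ℕ → Set X) : Prop :=
  (∀ n, IsOpen (U n)) ∧ (⋃ n, U n) = Set.univ ∧ (Set.range U).Infinite ∧
  ∀ B ∈ 𝔅, ∃ n₀ : ℕ, ∃ δ : ℕ → ℝ, ∀ n ≥ n₀, 0 < δ n ∧ enl B (δ n) ⊆ U n

/-- `g` belongs to the basic τˢ_𝔅-neighborhood `[B,ε]ˢ(f)`. -/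
def SNbhd (B : Set X) (ε : ℝ) (f g : C(X, ℝ)) : Prop :=
  ∃ δ > 0, ∀ x ∈ enl B δ, |g x - f x| < ε

/-- `f` lies in the τˢ_𝔅-closure of `A`. -/
def SCl (𝔅 : Set (Set X)) (A : Set C(X, ℝ)) (f : C(X, ℝ)) : Prop :=
  ∀ B ∈ 𝔅, ∀ ε > 0, ∃ g ∈ A, SNbhd B ε f g

/-- The sequence `g` τˢ_𝔅-converges to `f`. -/
def SConv (𝔅 : Set (Set X)) (g : ℕ → C(X, ℝ)) (f : C(X, ℝ)) : Prop :=
  ∀ B ∈ 𝔅, ∀ ε > 0, ∃ N : ℕ, ∀ n ≥ N, SNbhd B ε f (g n)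

/-- Sublevel set of `|f|`. -/
def Uf (f : C(X, ℝ)) (c : ℝ) : Set X := {x | |f x| < c}

lemma isOpen_Uf (f : C(X, ℝ)) (c : ℝ) : IsOpen (Uf f c) :=
  isOpen_lt (continuous_abs.comp f.continuous) continuous_const

lemma mem_enl_self {B : Set X} {x : X} (hx : x ∈ B) {δ : ℝ} (hδ : 0 < δ) :
    x ∈ enl B δ :=
  Set.mem_biUnion hx (Metric.mem_ball_self hδ)

lemma cov_isBsCover (𝔅 : Set (Set X)) (h𝔅 : IsBorn 𝔅) (A : Set C(X, ℝ))
    (hA : SCl 𝔅 A 0) (c : ℝ) (hc : 0 < c)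
    (hne : ∀ f ∈ A, ∃ x, c ≤ |f x|) :
    IsBsCover 𝔅 ((fun f => Uf f c) '' A) := by
  refine ⟨?_, ?_, ?_, ?_⟩
  · rintro U ⟨f, -, rfl⟩; exact isOpen_Uf f c
  · rintro ⟨f, hf, hU⟩
    obtain ⟨x, hx⟩ := hne f hf
    have hU' : Uf f c = Set.univ := hU
    have hx' : x ∈ Uf f c := by rw [hU']; exact Set.mem_univ x
    exact absurd hx' (by simpa [Uf] using hx)
  · ext x
    simp only [Set.mem_sUnion, Set.mem_univ, iff_true]
    obtain ⟨B, hB, hxB⟩ : ∃ B ∈ 𝔅, x ∈ B := by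
      have h := h𝔅.2.1
      rw [Set.sUnion_eq_univ_iff] at h
      exact h x
    obtain ⟨g, hg, δ, hδ, hgx⟩ := hA B hB c hc
    refine ⟨Uf g c, ⟨g, hg, rfl⟩, ?_⟩
    have hx' : x ∈ enl B δ := mem_enl_self hxB hδ
    simpa [Uf] using hgx x hx'
  · intro B hB
    obtain ⟨g, hg, δ, hδ, hgx⟩ := hA B hB c hc
    exact ⟨Uf g c, ⟨g, hg, rfl⟩, δ, hδ, fun x hx => by simpa [Uf] using hgx x hx⟩

theorem statement13 (𝔅 : Set (Set X)) (h𝔅 : IsBorn 𝔅) (hcb : HasClosedBase 𝔅)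
    (hsel : ∀ 𝒰 : ℕ → Set (Set X), (∀ n, IsBsCover 𝔅 (𝒰 n)) →
      ∃ 𝒱 : ℕ → Set (Set X), (∀ n, 𝒱 n ⊆ 𝒰 n ∧ (𝒱 n).Finite) ∧
        IsBsCover 𝔅 (⋃ n, 𝒱 n)) :
    ∀ A : ℕ → Set C(X, ℝ), (∀ n, SCl 𝔅 (A n) 0) →
      ∃ F : ℕ → Set C(X, ℝ), (∀ n, F n ⊆ A n ∧ (F n).Finite) ∧
        SCl 𝔅 (⋃ n, F n) 0 := by
  classical
  intro A hA
  by_cases hcase : ∀ M : ℕ, ∃ n ≥ M, ∃ f ∈ A n, ∀ x, |f x| < 1 / (M + 1)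
  · -- Case 1: there are arbitrarily late sets containing uniformly small functions.
    choose n hn f hf hsmall using hcase
    refine ⟨fun k => f '' {M | n M = k}, fun k => ⟨?_, ?_⟩, ?_⟩
    · rintro g ⟨M, hM, rfl⟩
      rw [← show n M = k from hM]
      exact hf M
    · refine Set.Finite.image _ ((Set.finite_Iic k).subset ?_)
      intro M hM
      simp only [Set.mem_setOf_eq] at hM
      exact Set.mem_Iic.2 (hM ▸ hn M)
    · intro B _ ε hε
      obtain ⟨M, hM⟩ := exists_nat_one_div_lt hε
      refine ⟨f M, Set.mem_iUnion.2 ⟨n M, ⟨M, rfl, rfl⟩⟩, 1, one_pos, fun x _ => ?_⟩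
      simpa using (hsmall M x).trans hM
  · -- Case 2: beyond some M, no member of `A n` is everywhere below `1/(M+1)`.
    push_neg at hcase
    obtain ⟨M, hM⟩ := hcase
    -- for each m apply the selection hypothesis to the covers built from
    -- `A (M+m+j)` with threshold `1/(M+m+1)`
    have key : ∀ m : ℕ, ∃ 𝒱 : ℕ → Set (Set X),
        (∀ j, 𝒱 j ⊆ (fun f => Uf f (1 / (M + m + 1))) '' A (M + m + j) ∧ (𝒱 j).Finite) ∧
        IsBsCover 𝔅 (⋃ j, 𝒱 j) := by
      intro m
      refine hsel _ (fun j => cov_isBsCover 𝔅 h𝔅 _ (hA _) _ (by positivity) ?_)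
      intro g hg
      obtain ⟨x, hx⟩ := hM (M + m + j) (by omega) g hg
      refine ⟨x, le_trans ?_ hx⟩
      apply one_div_le_one_div_of_le (by positivity)
      push_cast; linarith
    choose 𝒱 h𝒱 hcov using key
    -- choose a witness function for each selected set
    have hch : ∀ m j U, ∃ g : C(X, ℝ), U ∈ 𝒱 m j →
        g ∈ A (M + m + j) ∧ Uf g (1 / (M + m + 1)) = U := by
      intro m j U
      by_cases hU : U ∈ 𝒱 m j
      · obtain ⟨g, hg, hgU⟩ := (h𝒱 m j).1 hU
        exact ⟨g, fun _ => ⟨hg, hgU⟩⟩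
      · exact ⟨0, fun h => absurd h hU⟩
    choose pick hpick using hch
    refine ⟨fun k => ⋃ m, ⋃ (_ : M + m ≤ k), pick m (k - (M + m)) '' 𝒱 m (k - (M + m)),
      fun k => ⟨?_, ?_⟩, ?_⟩
    · rintro g hg
      simp only [Set.mem_iUnion] at hg
      obtain ⟨m, hm, U, hU, rfl⟩ := hg
      have := (hpick m (k - (M + m)) U hU).1
      rwa [show M + m + (k - (M + m)) = k by omega] at this
    · refine Set.Finite.subset (Set.Finite.biUnion (Set.finite_Iic k)
        (fun m _ => ((h𝒱 m (k - (M + m))).2.image (pick m (k - (M + m)))))) ?_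
      rintro g hg
      simp only [Set.mem_iUnion] at hg
      obtain ⟨m, hm, hg⟩ := hg
      exact Set.mem_biUnion (Set.mem_Iic.2 (by omega)) hg
    · intro B hB ε hε
      obtain ⟨m, hm⟩ := exists_nat_one_div_lt hε
      have hm' : (1 : ℝ) / (M + m + 1) < ε := by
        refine lt_of_le_of_lt ?_ hm
        apply one_div_le_one_div_of_le (by positivity)
        push_cast; linarith
      obtain ⟨U, hU, δ, hδ, hsub⟩ := (hcov m).2.2.2 B hB
      obtain ⟨j, hUj⟩ := Set.mem_iUnion.1 hU
      obtain ⟨hg, hUg⟩ := hpick m j U hUj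
      refine ⟨pick m j U, ?_, δ, hδ, fun x hx => ?_⟩
      · refine Set.mem_iUnion.2 ⟨M + m + j, Set.mem_iUnion.2 ⟨m, ?_⟩⟩
        refine Set.mem_iUnion.2 ⟨by omega, ?_⟩
        rw [show M + m + j - (M + m) = j by omega]
        exact Set.mem_image_of_mem _ hUj
      · have hxU : x ∈ U := hsub hx
        rw [← hUg] at hxU
        have : x ∈ Uf (pick m j U) (1 / (M + m + 1)) := hxU
        simp only [Uf, Set.mem_setOf_eq] at this
        simpa using this.trans hm'
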